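/- Let p be a prime with p ≡ 2 or 3 (mod 5) and r a positive integer. The rank-metric code φ_O((F_{p²})^r) ⊆ M_{2×2r}(F_p), which has dimension ρ = 2r and minimum rank distance δ = 2, attains the Singleton bound for rank-metric codes: ρ = min{2(2r − δ + 1), 2r(2 − δ + 1)} = 2r. Hence it is a maximum rank distance (MRD) code. -/

import Mathlib

/-- The 2×2r matrix whose i-th 2×2 block is [[dᵢ, cᵢ],[cᵢ+dᵢ, dᵢ]]. -/
def blockPhi (p r : ℕ) (c d : Fin r → ZMod p) : Matrix (Fin 2) (Fin (2 * r)) (ZMod p) :=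
  Matrix.of fun u j =>
    if u = (0 : Fin 2) then
      (if (j : ℕ) % 2 = 0 then d ⟨(j : ℕ) / 2, by have := j.isLt; omega⟩
       else c ⟨(j : ℕ) / 2, by have := j.isLt; omega⟩)
    else
      (if (j : ℕ) % 2 = 0 then
        c ⟨(j : ℕ) / 2, by have := j.isLt; omega⟩ + d ⟨(j : ℕ) / 2, by have := j.isLt; omega⟩
       else d ⟨(j : ℕ) / 2, by have := j.isLt; omega⟩)

lemma ns2 : ¬ IsSquare ((((2:ℕ):ℤ) : ℤ) : ZMod 5) := by
  have : ((((2:ℕ):ℤ) : ℤ) : ZMod 5) = (2 : ZMod 5) := by norm_cast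
  rw [this]; decide

lemma ns3 : ¬ IsSquare ((((3:ℕ):ℤ) : ℤ) : ZMod 5) := by
  have : ((((3:ℕ):ℤ) : ℤ) : ZMod 5) = (3 : ZMod 5) := by norm_cast
  rw [this]; decide

lemma keyNT (p : ℕ) (hp : p.Prime) (h5 : p % 5 = 2 ∨ p % 5 = 3) :
    ∀ x : ZMod p, x * x ≠ x + 1 := by
  haveI : Fact p.Prime := ⟨hp⟩
  rcases eq_or_ne p 2 with rfl | hp2
  · decide
  intro x hx
  have h5sq : IsSquare (5 : ZMod p) := ⟨2 * x - 1, by linear_combination -4 * hx⟩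
  have hp5 : p ≠ 5 := by rintro rfl; omega
  haveI : Fact (Nat.Prime 5) := ⟨by norm_num⟩
  have h50 : ((5 : ℤ) : ZMod p) ≠ 0 := by
    have : ¬ ((5 : ℕ) : ZMod p) = 0 := by
      rw [ZMod.natCast_eq_zero_iff]
      intro hd
      exact hp5 ((Nat.prime_dvd_prime_iff_eq hp (by norm_num)).mp hd)
    exact_mod_cast this
  have h1 : legendreSym p 5 = 1 :=
    (legendreSym.eq_one_iff p h50).mpr (by exact_mod_cast h5sq)
  have h2 : legendreSym p 5 = -1 := by
    have hqr := legendreSym.quadratic_reciprocity_one_mod_four (p := 5) (q := p)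
      (by norm_num) hp2
    have hqr' : legendreSym p 5 = legendreSym 5 (p : ℤ) := by exact_mod_cast hqr
    rw [hqr', legendreSym.mod 5 (p : ℤ)]
    have : ((p : ℤ) % ((5:ℕ) : ℤ)) = ((p % 5 : ℕ) : ℤ) := by push_cast; omega
    rw [this]
    rcases h5 with h | h <;> rw [h]
    · exact (legendreSym.eq_neg_one_iff 5 (a := ((2:ℕ):ℤ))).mpr ns2
    · exact (legendreSym.eq_neg_one_iff 5 (a := ((3:ℕ):ℤ))).mpr ns3
  rw [h1] at h2; norm_num at h2

lemma rank_ge (p r : ℕ) [Fact p.Prime] (key : ∀ x : ZMod p, x * x ≠ x + 1)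
    (c d : Fin r → ZMod p) (i : Fin r) (h : ¬(c i = 0 ∧ d i = 0)) :
    2 ≤ (blockPhi p r c d).rank := by
  set M := blockPhi p r c d with hM
  have hir := i.isLt
  set g : Fin 2 → Fin (2 * r) := fun v => ⟨2 * (i : ℕ) + (v : ℕ), by have := v.isLt; omega⟩
    with hg
  set N := M.submatrix id g with hN
  have hNeq : N = !![d i, c i; c i + d i, d i] := by
    ext u v
    fin_cases u <;> fin_cases v <;>
      simp [hN, hM, hg, blockPhi, Matrix.submatrix_apply, Nat.mul_mod_right] <;>
      · congr 1
        exact Fin.ext (by simp; omega)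
  have hdet : (!![d i, c i; c i + d i, d i]).det ≠ 0 := by
    rw [Matrix.det_fin_two]
    simp only [Matrix.of_apply, Matrix.cons_val', Matrix.cons_val_zero, Matrix.cons_val_one,
      Matrix.head_cons, Matrix.head_fin_const, Matrix.empty_val', Matrix.cons_val_fin_one]
    intro hd
    rcases eq_or_ne (c i) 0 with hc | hc
    · rw [hc] at hd
      simp only [zero_mul, add_zero, zero_add, sub_zero, mul_eq_zero, or_self] at hd
      exact h ⟨hc, hd⟩
    · apply key (d i * (c i)⁻¹)
      field_simp
      linear_combination hd
  have hNrank : N.rank = 2 := by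
    rw [hNeq, Matrix.rank_of_isUnit _ ((Matrix.isUnit_iff_isUnit_det _).mpr hdet.isUnit)]
    simp
  have hfac : N = M * (Matrix.of fun j v => if g v = j then (1 : ZMod p) else 0) := by
    ext u v
    simp only [hN, Matrix.submatrix_apply, id_eq, Matrix.mul_apply, Matrix.of_apply, mul_ite,
      mul_one, mul_zero]
    rw [Finset.sum_ite_eq (Finset.univ) (g v) (fun j => M u j)]
    simp
  calc 2 = N.rank := hNrank.symm
    _ ≤ M.rank := hfac ▸ Matrix.rank_mul_le_left _ _

/-- The rank-metric code φ_O((F_{p²})ʳ) attains the Singleton bound: its dimension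
equals min{2(2r-2+1), 2r(2-2+1)} with δ = 2, and its minimum rank distance is 2;
hence it is an MRD code. -/
theorem stmt_8 (p : ℕ) (hp : p.Prime) (h5 : p % 5 = 2 ∨ p % 5 = 3) (r : ℕ) (hr : 1 ≤ r)
    (K : Type) [Field K] [Fintype K] [Algebra (ZMod p) K]
    (hK : Fintype.card K = p ^ 2) (ω : K)
    (hω : ∀ x : K, ∃! cd : ZMod p × ZMod p,
      x = algebraMap (ZMod p) K cd.1 + cd.2 • ω)
    (φ : (Fin r → K) →ₗ[ZMod p] Matrix (Fin 2) (Fin (2 * r)) (ZMod p))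
    (hφ : ∀ c d : Fin r → ZMod p,
      φ (fun i => algebraMap (ZMod p) K (c i) + d i • ω) = blockPhi p r c d)
    (hinj : Function.Injective φ) :
    sInf {n : ℕ | ∃ M ∈ LinearMap.range φ, M ≠ 0 ∧ n = M.rank} = 2 ∧
    Module.finrank (ZMod p) (LinearMap.range φ) =
      min (2 * (2 * r - 2 + 1)) (2 * r * (2 - 2 + 1)) := by
  haveI : Fact p.Prime := ⟨hp⟩
  have key := keyNT p hp h5
  constructor
  · -- minimum rank distance is 2
    -- the witness element of rank 2
    set c0 : Fin r → ZMod p := fun i => if (i : ℕ) = 0 then 1 else 0 with hc0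
    set M₀ := blockPhi p r c0 0 with hM₀
    have hmem : M₀ ∈ LinearMap.range φ := ⟨_, hφ c0 0⟩
    have hi0 : ¬ (c0 ⟨0, hr⟩ = 0 ∧ (0 : Fin r → ZMod p) ⟨0, hr⟩ = 0) := by
      simp [hc0]
    have hge := rank_ge p r key c0 0 ⟨0, hr⟩ hi0
    have hrank : M₀.rank = 2 := by
      refine le_antisymm ?_ hge
      simpa using M₀.rank_le_card_height
    have hne : M₀ ≠ 0 := by
      intro h0
      have h1 := congrFun (congrFun h0 0) ⟨1, by omega⟩
      simp [hM₀, blockPhi, hc0] at h1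
    have hmem2 : 2 ∈ {n : ℕ | ∃ M ∈ LinearMap.range φ, M ≠ 0 ∧ n = M.rank} :=
      ⟨M₀, hmem, hne, hrank.symm⟩
    refine le_antisymm (Nat.sInf_le hmem2) (le_csInf ⟨2, hmem2⟩ ?_)
    rintro n ⟨M, ⟨v, rfl⟩, hM0, rfl⟩
    set c : Fin r → ZMod p := fun i => (hω (v i)).choose.1 with hc
    set d : Fin r → ZMod p := fun i => (hω (v i)).choose.2 with hd
    have hv : (fun i => algebraMap (ZMod p) K (c i) + d i • ω) = v :=
      funext fun i => ((hω (v i)).choose_spec.1).symm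
    have hMv : φ v = blockPhi p r c d := by rw [← hv]; exact hφ c d
    have hex : ∃ i, ¬ (c i = 0 ∧ d i = 0) := by
      by_contra hcon
      push_neg at hcon
      apply hM0
      rw [hMv]
      have hcz : c = 0 := funext fun i => (hcon i).1
      have hdz : d = 0 := funext fun i => (hcon i).2
      rw [hcz, hdz]
      ext u j
      simp only [blockPhi, Matrix.of_apply, Pi.zero_apply, Matrix.zero_apply, add_zero]
      split <;> split <;> rfl
    obtain ⟨i, hi⟩ := hex
    rw [hMv]
    exact rank_ge p r key c d i hi
  · -- dimension attains the Singleton bound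
    have hfrk : Module.finrank (ZMod p) K = 2 := by
      have hcard := Module.card_eq_pow_finrank (K := ZMod p) (V := K)
      rw [ZMod.card, hK] at hcard
      exact (Nat.pow_right_injective hp.two_le hcard.symm)
    have hdim : Module.finrank (ZMod p) (Fin r → K) = 2 * r := by
      rw [Module.finrank_pi_fintype, Finset.sum_const, Finset.card_univ, Fintype.card_fin,
        hfrk, smul_eq_mul]
      ring
    rw [LinearMap.finrank_range_of_inj hinj, hdim]
    omega
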